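/- The matrices A = [[1,2],[0,1]] and B = [[1,0],[2,1]] generate a free subgroup of rank 2 in SL(2,ℤ); equivalently, the homomorphism from the free group on {a,b} to SL(2,ℤ) sending a ↦ A and b ↦ B is injective. -/

import Mathlib

open Pointwise Cardinal Monoid

/-- The matrix `A = [[1,2],[0,1]]` as an element of `SL(2,ℤ)`. -/
def matA : Matrix.SpecialLinearGroup (Fin 2) ℤ :=
  ⟨!![1, 2; 0, 1], by simp [Matrix.det_fin_two_of]⟩

/-- The matrix `B = [[1,0],[2,1]]` as an element of `SL(2,ℤ)`. -/
def matB : Matrix.SpecialLinearGroup (Fin 2) ℤ :=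
  ⟨!![1, 0; 2, 1], by simp [Matrix.det_fin_two_of]⟩

noncomputable instance : MulAction (Matrix.SpecialLinearGroup (Fin 2) ℤ) (Fin 2 → ℤ) where
  smul g v := g.1.mulVec v
  one_smul v := by
    show Matrix.mulVec _ _ = _
    simp
  mul_smul g h v := by
    show Matrix.mulVec _ _ = Matrix.mulVec _ (Matrix.mulVec _ _)
    rw [Matrix.SpecialLinearGroup.coe_mul, Matrix.mulVec_mulVec]

lemma smul_def (g : Matrix.SpecialLinearGroup (Fin 2) ℤ) (v : Fin 2 → ℤ) :
    g • v = g.1.mulVec v := rfl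

lemma zpow_coe_aux (M : Matrix.SpecialLinearGroup (Fin 2) ℤ)
    (f : ℤ → Matrix (Fin 2) (Fin 2) ℤ)
    (h0 : f 0 = 1) (hs : ∀ n, f n * M.1 = f (n+1)) (hp : ∀ n, f n * (M⁻¹).1 = f (n-1)) (n : ℤ) :
    (M ^ n).1 = f n := by
  induction n using Int.induction_on with
  | zero => simp [h0]
  | succ k ih => rw [zpow_add_one, Matrix.SpecialLinearGroup.coe_mul, ih, hs]
  | pred k ih =>
      rw [zpow_sub_one, Matrix.SpecialLinearGroup.coe_mul, ih, hp]

lemma matA_zpow (n : ℤ) : (matA ^ n).1 = !![1, 2*n; 0, 1] := by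
  have hinv : (matA⁻¹).1 = !![1, -2; 0, 1] := by
    rw [Matrix.SpecialLinearGroup.coe_inv]
    show Matrix.adjugate !![1, 2; 0, 1] = _
    rw [Matrix.adjugate_fin_two]
    norm_num
  refine zpow_coe_aux matA (fun n => !![1, 2*n; 0, 1]) (by norm_num [Matrix.one_fin_two.symm]) ?_ ?_ n
  · intro n
    show _ * !![1, 2; 0, 1] = _
    rw [Matrix.mul_fin_two]
    ring_nf
  · intro n
    rw [hinv, Matrix.mul_fin_two]
    ring_nf

lemma matB_zpow (n : ℤ) : (matB ^ n).1 = !![1, 0; 2*n, 1] := by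
  have hinv : (matB⁻¹).1 = !![1, 0; -2, 1] := by
    rw [Matrix.SpecialLinearGroup.coe_inv]
    show Matrix.adjugate !![1, 0; 2, 1] = _
    rw [Matrix.adjugate_fin_two]
    norm_num
  refine zpow_coe_aux matB (fun n => !![1, 0; 2*n, 1]) (by norm_num [Matrix.one_fin_two.symm]) ?_ ?_ n
  · intro n
    show _ * !![1, 0; 2, 1] = _
    rw [Matrix.mul_fin_two]
    ring_nf
  · intro n
    rw [hinv, Matrix.mul_fin_two]
    ring_nf

lemma matA_smul (n : ℤ) (v : Fin 2 → ℤ) :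
    (matA ^ n) • v = ![v 0 + 2*n * v 1, v 1] := by
  funext i
  fin_cases i <;>
    simp [smul_def, matA_zpow, Matrix.mulVec, dotProduct, Fin.sum_univ_two]

lemma matB_smul (n : ℤ) (v : Fin 2 → ℤ) :
    (matB ^ n) • v = ![v 0, 2*n * v 0 + v 1] := by
  funext i
  fin_cases i <;>
    simp [smul_def, matB_zpow, Matrix.mulVec, dotProduct, Fin.sum_univ_two]

lemma key_abs (n x y : ℤ) (hn : n ≠ 0) (h : |x| < |y|) : |y| < |x + 2*n*y| := by
  have h1 : (1:ℤ) ≤ |n| := Int.one_le_abs hn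
  have h2 : |2*n*y| = 2 * |n| * |y| := by rw [abs_mul, abs_mul]; norm_num
  have h3 : 2 * |y| ≤ 2 * |n| * |y| := by nlinarith [abs_nonneg y]
  have h4 : |2*n*y| ≤ |x + 2*n*y| + |x| := by
    have := abs_add_le (x + 2*n*y) (-x)
    simpa using this
  omega

lemma key_abs' (n x y : ℤ) (hn : n ≠ 0) (h : |x| < |y|) : |y| < |2*n*y + x| := by
  rw [add_comm]; exact key_abs n x y hn h

theorem matrices_generate_free_group :
    Function.Injective
      ((FreeGroup.lift fun x : Bool => if x then matA else matB) :
        FreeGroup Bool →* Matrix.SpecialLinearGroup (Fin 2) ℤ) := by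
  have : (FreeGroup.lift fun x : Bool => if x then matA else matB) =
      (Monoid.CoprodI.lift fun i : Bool =>
        FreeGroup.lift fun _ : Unit => if i then matA else matB).comp
        (@freeGroupEquivCoprodI Bool).toMonoidHom := by
    ext i
    simp
  rw [this, MonoidHom.coe_comp]
  refine Function.Injective.comp ?_ (MulEquiv.injective freeGroupEquivCoprodI)
  let X : Bool → Set (Fin 2 → ℤ) := fun b =>
    if b then {v | |v 1| < |v 0|} else {v | |v 0| < |v 1|}
  refine Monoid.CoprodI.lift_injective_of_ping_pong _ ?_ X ?_ ?_ ?_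
  · right
    exact ⟨true, by
      rw [Cardinal.mk_congr FreeGroup.freeGroupUnitEquivInt, Cardinal.mk_int]
      exact le_of_lt (Cardinal.nat_lt_aleph0 3)⟩
  · intro b
    cases b
    · exact ⟨![0, 1], by norm_num [X]⟩
    · exact ⟨![1, 0], by norm_num [X]⟩
  · intro i j hij
    cases i <;> cases j
    · exact absurd rfl hij
    · rw [Function.onFun, Set.disjoint_left]
      intro v hv hv'
      simp only [X, Set.mem_setOf_eq, if_true, if_false, Bool.false_eq_true] at hv hv'
      omega
    · rw [Function.onFun, Set.disjoint_left]
      intro v hv hv'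
      simp only [X, Set.mem_setOf_eq, if_true, if_false, Bool.false_eq_true] at hv hv'
      omega
    · exact absurd rfl hij
  · intro i j hij
    refine FreeGroup.freeGroupUnitEquivInt.forall_congr_left.mpr ?_
    intro n hne1
    change FreeGroup.lift (fun _ => if i then matA else matB) (FreeGroup.of () ^ n) • X j ⊆ X i
    simp only [map_zpow, FreeGroup.lift_apply_of]
    have hnne0 : n ≠ 0 := by
      rintro rfl
      exact hne1 (by simp [FreeGroup.freeGroupUnitEquivInt])
    rintro _ ⟨v, hv, rfl⟩
    cases i <;> cases j
    · exact absurd rfl hij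
    · -- i = false (B), j = true
      simp only [X, if_true, if_false, Set.mem_setOf_eq, Bool.false_eq_true] at hv ⊢
      rw [matB_smul]
      simp only [Matrix.cons_val_zero, Matrix.cons_val_one, Matrix.head_cons]
      exact key_abs' n (v 1) (v 0) hnne0 hv
    · -- i = true (A), j = false
      simp only [X, if_true, if_false, Set.mem_setOf_eq, Bool.false_eq_true] at hv ⊢
      rw [matA_smul]
      simp only [Matrix.cons_val_zero, Matrix.cons_val_one, Matrix.head_cons]
      exact key_abs n (v 0) (v 1) hnne0 hv
    · exact absurd rfl hij
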